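/- Let m, n, r, s be positive integers and let 1 ≤ μ < √(mn)/(r√s). Suppose X = L + S ∈ ℝ^{m×n} where L is μ-incoherent of rank at most r and S has at most s nonzero entries. Then ‖L‖_F ≤ (1 − μ²r²s/(mn))^{−1/2} ‖X‖_F and ‖S‖_F ≤ (1 − μ²r²s/(mn))^{−1/2} ‖X‖_F. -/

import Mathlib

open scoped BigOperators
open Matrix

noncomputable section

def mInner {m n : ℕ} (A B : Matrix (Fin m) (Fin n) ℝ) : ℝ := ∑ i, ∑ j, A i j * B i j

def frobSq {m n : ℕ} (A : Matrix (Fin m) (Fin n) ℝ) : ℝ := ∑ i, ∑ j, (A i j) ^ 2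

def frobNorm {m n : ℕ} (A : Matrix (Fin m) (Fin n) ℝ) : ℝ := Real.sqrt (frobSq A)

def vInner {p : ℕ} (u v : Fin p → ℝ) : ℝ := ∑ i, u i * v i

def vNormSq {p : ℕ} (v : Fin p → ℝ) : ℝ := ∑ i, (v i) ^ 2

def vNorm {p : ℕ} (v : Fin p → ℝ) : ℝ := Real.sqrt (vNormSq v)

/-- Number of nonzero entries of a matrix. -/
def sparseCount {m n : ℕ} (S : Matrix (Fin m) (Fin n) ℝ) : ℕ :=
  {q : Fin m × Fin n | S q.1 q.2 ≠ 0}.ncard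

/-- `L` is `μ`-incoherent of rank at most `r`: `rank L ≤ r` and `L` admits a (truncated)
singular value decomposition `L = U * diagonal d * Vᵀ` with `U ∈ ℝ^{m×r}`, `V ∈ ℝ^{n×r}`
having orthonormal columns (the top `r` left/right singular vectors) whose rows satisfy
`‖Uᵀ eᵢ‖₂ ≤ √(μ r / m)` and `‖Vᵀ fⱼ‖₂ ≤ √(μ r / n)`. -/
def Incoherent {m n : ℕ} (μ : ℝ) (r : ℕ) (L : Matrix (Fin m) (Fin n) ℝ) : Prop :=
  L.rank ≤ r ∧
  ∃ (U : Matrix (Fin m) (Fin r) ℝ) (d : Fin r → ℝ) (V : Matrix (Fin n) (Fin r) ℝ),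
    Uᵀ * U = 1 ∧ Vᵀ * V = 1 ∧ (∀ k, 0 ≤ d k) ∧ L = U * Matrix.diagonal d * Vᵀ ∧
    (∀ i : Fin m, Real.sqrt (∑ k, (U i k) ^ 2) ≤ Real.sqrt (μ * r / m)) ∧
    (∀ j : Fin n, Real.sqrt (∑ k, (V j k) ^ 2) ≤ Real.sqrt (μ * r / n))

/-- The set of low-rank plus sparse matrices `LS_{m,n}(r,s,μ)`. -/
def LS (m n r s : ℕ) (μ : ℝ) : Set (Matrix (Fin m) (Fin n) ℝ) :=
  {X | ∃ L S : Matrix (Fin m) (Fin n) ℝ,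
      X = L + S ∧ Incoherent μ r L ∧ sparseCount S ≤ s}

lemma frobSq_trace {m n : ℕ} (A : Matrix (Fin m) (Fin n) ℝ) :
    frobSq A = (Aᵀ * A).trace := by
  simp only [frobSq, Matrix.trace, Matrix.mul_apply, Matrix.diag, Matrix.transpose_apply, sq]
  rw [Finset.sum_comm]

lemma frobSq_svd {m n r : ℕ} (U : Matrix (Fin m) (Fin r) ℝ) (d : Fin r → ℝ)
    (V : Matrix (Fin n) (Fin r) ℝ) (hU : Uᵀ * U = 1) (hV : Vᵀ * V = 1) :
    frobSq (U * Matrix.diagonal d * Vᵀ) = ∑ k, d k ^ 2 := by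
  rw [frobSq_trace]
  have : (U * Matrix.diagonal d * Vᵀ)ᵀ * (U * Matrix.diagonal d * Vᵀ)
      = V * (Matrix.diagonal d * (Matrix.diagonal d * Vᵀ)) := by
    simp only [Matrix.transpose_mul, Matrix.transpose_transpose, Matrix.diagonal_transpose,
      Matrix.mul_assoc]
    rw [← Matrix.mul_assoc Uᵀ U, hU, Matrix.one_mul]
  rw [this, ← Matrix.mul_assoc, ← Matrix.mul_assoc, Matrix.trace_mul_cycle,
    ← Matrix.mul_assoc, hV, Matrix.one_mul]
  simp [Matrix.diagonal_mul_diagonal, Matrix.trace, sq, Matrix.diag]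

lemma key_ineq (q A B t XX : ℝ) (hq : 0 ≤ q) (hA : 0 ≤ A) (hB : 0 ≤ B) (ht : 0 ≤ t)
    (ht2 : t ^ 2 ≤ q * A * B) (hX : A - 2 * t + B ≤ XX) :
    (1 - q) * A ≤ XX ∧ (1 - q) * B ≤ XX := by
  have hu : 0 ≤ B + q * A := by positivity
  have hu' : 0 ≤ A + q * B := by positivity
  have h1 : 2 * t ≤ B + q * A := by
    have hsq : (2 * t) ^ 2 ≤ (B + q * A) ^ 2 := by nlinarith [sq_nonneg (B - q * A)]
    exact le_of_pow_le_pow_left₀ two_ne_zero hu hsq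
  have h2 : 2 * t ≤ A + q * B := by
    have hsq : (2 * t) ^ 2 ≤ (A + q * B) ^ 2 := by nlinarith [sq_nonneg (A - q * B)]
    exact le_of_pow_le_pow_left₀ two_ne_zero hu' hsq
  constructor
  · nlinarith
  · nlinarith

set_option maxHeartbeats 1000000 in
/-- Frobenius-norm bounds on the components of an incoherent low-rank plus
sparse decomposition, with `τ = (1 − μ²r²s/(mn))^{−1/2}`. -/
theorem component_norm_bound
    (m n r s : ℕ) (hm : 0 < m) (hn : 0 < n) (hr : 0 < r) (hs : 0 < s)
    (μ : ℝ) (hμ1 : 1 ≤ μ) (hμ : μ < Real.sqrt (m * n) / ((r : ℝ) * Real.sqrt s))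
    (X L S : Matrix (Fin m) (Fin n) ℝ) (hX : X = L + S)
    (hL : Incoherent μ r L) (hS : sparseCount S ≤ s) :
    frobNorm L ≤ (1 - μ ^ 2 * (r : ℝ) ^ 2 * (s : ℝ) / ((m : ℝ) * n)) ^ (-(1/2) : ℝ) * frobNorm X ∧
    frobNorm S ≤ (1 - μ ^ 2 * (r : ℝ) ^ 2 * (s : ℝ) / ((m : ℝ) * n)) ^ (-(1/2) : ℝ) * frobNorm X := by
  obtain ⟨-, U, d, V, hU, hV, hd, hLdef, hUrow, hVrow⟩ := hL
  have hm' : (0:ℝ) < m := by exact_mod_cast hm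
  have hn' : (0:ℝ) < n := by exact_mod_cast hn
  have hr' : (0:ℝ) < r := by exact_mod_cast hr
  have hs' : (0:ℝ) < s := by exact_mod_cast hs
  have hmn : (0:ℝ) < (m:ℝ) * n := by positivity
  have hμ0 : (0:ℝ) < μ := lt_of_lt_of_le one_pos hμ1
  set q : ℝ := μ ^ 2 * (r : ℝ) ^ 2 * (s : ℝ) / ((m : ℝ) * n) with hq_def
  have hq0 : 0 ≤ q := by positivity
  -- q < 1
  have hq1 : q < 1 := by
    have h1 : μ * ((r:ℝ) * Real.sqrt s) < Real.sqrt ((m:ℝ) * n) := by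
      rw [div_eq_mul_inv] at hμ
      have hpos : (0:ℝ) < (r:ℝ) * Real.sqrt s := by positivity
      calc μ * ((r:ℝ) * Real.sqrt s)
          < Real.sqrt ((m:ℝ)*n) * ((r:ℝ) * Real.sqrt s)⁻¹ * ((r:ℝ) * Real.sqrt s) := by
            exact mul_lt_mul_of_pos_right hμ hpos
        _ = Real.sqrt ((m:ℝ)*n) := by field_simp
    have h2 : μ ^ 2 * ((r:ℝ)^2 * s) < (m:ℝ) * n := by
      have hss : Real.sqrt s ^ 2 = (s:ℝ) := Real.sq_sqrt hs'.le
      have hmm : Real.sqrt ((m:ℝ)*n) ^ 2 = (m:ℝ)*n := Real.sq_sqrt hmn.le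
      have h3 := mul_self_lt_mul_self (by positivity) h1
      nlinarith [h3, hss, hmm]
    rw [hq_def, div_lt_one hmn]
    nlinarith
  -- frobSq L = sum of squares of d
  have hLF : frobSq L = ∑ k, d k ^ 2 := by rw [hLdef, frobSq_svd U d V hU hV]
  have hAnn : 0 ≤ frobSq L := by
    rw [hLF]; positivity
  have hBnn : 0 ≤ frobSq S := Finset.sum_nonneg fun i _ => Finset.sum_nonneg fun j _ => sq_nonneg _
  have hXnn : 0 ≤ frobSq X := Finset.sum_nonneg fun i _ => Finset.sum_nonneg fun j _ => sq_nonneg _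
  -- entry bound
  have hentry : ∀ i j, (L i j) ^ 2 ≤ μ ^ 2 * (r:ℝ) ^ 2 / ((m:ℝ) * n) * frobSq L := by
    intro i j
    have hLij : L i j = ∑ k, U i k * (d k * V j k) := by
      rw [hLdef, Matrix.mul_assoc, Matrix.mul_apply]
      refine Finset.sum_congr rfl fun k _ => ?_
      rw [Matrix.diagonal_mul, Matrix.transpose_apply]
    have hcs : (L i j) ^ 2 ≤ (∑ k, (U i k) ^ 2) * (∑ k, (d k * V j k) ^ 2) := by
      rw [hLij]; exact Finset.sum_mul_sq_le_sq_mul_sq _ _ _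
    have hUi : ∑ k, (U i k) ^ 2 ≤ μ * r / m := by
      have h2 : (0:ℝ) ≤ μ * r / m := by positivity
      exact (Real.sqrt_le_sqrt_iff h2).mp (hUrow i)
    have hVj : ∀ k, (V j k) ^ 2 ≤ μ * r / n := by
      intro k
      have h2 : (0:ℝ) ≤ μ * r / n := by positivity
      have h4 : ∑ k', (V j k') ^ 2 ≤ μ * r / n := (Real.sqrt_le_sqrt_iff h2).mp (hVrow j)
      have h3 : (V j k) ^ 2 ≤ ∑ k', (V j k') ^ 2 :=
        Finset.single_le_sum (fun k' _ => sq_nonneg (V j k')) (Finset.mem_univ k)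
      linarith
    have hdv : ∑ k, (d k * V j k) ^ 2 ≤ (μ * r / n) * ∑ k, d k ^ 2 := by
      rw [Finset.mul_sum]
      refine Finset.sum_le_sum fun k _ => ?_
      rw [mul_pow, mul_comm (μ * ↑r / ↑n)]
      exact mul_le_mul_of_nonneg_left (hVj k) (sq_nonneg (d k))
    have hsum : (0:ℝ) ≤ ∑ k, d k ^ 2 := Finset.sum_nonneg fun k _ => sq_nonneg _
    calc (L i j) ^ 2 ≤ (∑ k, (U i k) ^ 2) * (∑ k, (d k * V j k) ^ 2) := hcs
      _ ≤ (μ * r / m) * ((μ * r / n) * ∑ k, d k ^ 2) := by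
          refine mul_le_mul hUi hdv (Finset.sum_nonneg fun k _ => sq_nonneg _) (by positivity)
      _ = μ ^ 2 * (r:ℝ) ^ 2 / ((m:ℝ) * n) * frobSq L := by rw [hLF]; field_simp
  -- the support finset
  set T : Finset (Fin m × Fin n) := Finset.univ.filter (fun p => S p.1 p.2 ≠ 0) with hT_def
  have hTcard : (T.card : ℝ) ≤ (s : ℝ) := by
    have hset : {p : Fin m × Fin n | S p.1 p.2 ≠ 0} = ↑T := by
      ext p; simp [hT_def]
    have : sparseCount S = T.card := by rw [sparseCount, hset, Set.ncard_coe_finset]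
    exact_mod_cast this ▸ hS
  -- inner product bound
  set t : ℝ := |mInner L S| with ht_def
  have ht0 : 0 ≤ t := abs_nonneg _
  have ht2 : t ^ 2 ≤ q * frobSq L * frobSq S := by
    have hm1 : mInner L S = ∑ p ∈ T, L p.1 p.2 * S p.1 p.2 := by
      rw [mInner, ← Finset.sum_product', Finset.univ_product_univ]
      refine (Finset.sum_filter_of_ne ?_).symm
      intro p _ hne h0
      exact hne (by rw [h0, mul_zero])
    have habs : t ≤ ∑ p ∈ T, |L p.1 p.2| * |S p.1 p.2| := by
      rw [ht_def, hm1]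
      calc |∑ p ∈ T, L p.1 p.2 * S p.1 p.2| ≤ ∑ p ∈ T, |L p.1 p.2 * S p.1 p.2| :=
            Finset.abs_sum_le_sum_abs _ _
        _ = ∑ p ∈ T, |L p.1 p.2| * |S p.1 p.2| := by simp [abs_mul]
    have hcs2 : (∑ p ∈ T, |L p.1 p.2| * |S p.1 p.2|) ^ 2
        ≤ (∑ p ∈ T, (L p.1 p.2) ^ 2) * (∑ p ∈ T, (S p.1 p.2) ^ 2) := by
      have := Finset.sum_mul_sq_le_sq_mul_sq T (fun p => |L p.1 p.2|) (fun p => |S p.1 p.2|)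
      simpa [sq_abs] using this
    have hLT : ∑ p ∈ T, (L p.1 p.2) ^ 2 ≤ (T.card : ℝ) * (μ ^ 2 * (r:ℝ) ^ 2 / ((m:ℝ)*n) * frobSq L) := by
      calc ∑ p ∈ T, (L p.1 p.2) ^ 2 ≤ ∑ _p ∈ T, (μ ^ 2 * (r:ℝ) ^ 2 / ((m:ℝ)*n) * frobSq L) :=
            Finset.sum_le_sum fun p _ => hentry p.1 p.2
        _ = (T.card : ℝ) * (μ ^ 2 * (r:ℝ) ^ 2 / ((m:ℝ)*n) * frobSq L) := by
            rw [Finset.sum_const, nsmul_eq_mul]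
    have hST : ∑ p ∈ T, (S p.1 p.2) ^ 2 ≤ frobSq S := by
      rw [frobSq, ← Finset.sum_product']
      exact Finset.sum_le_sum_of_subset_of_nonneg (Finset.filter_subset _ _)
        (fun p _ _ => sq_nonneg _)
    have hSTnn : 0 ≤ ∑ p ∈ T, (S p.1 p.2) ^ 2 := Finset.sum_nonneg fun p _ => sq_nonneg _
    have hLTnn : 0 ≤ ∑ p ∈ T, (L p.1 p.2) ^ 2 := Finset.sum_nonneg fun p _ => sq_nonneg _
    have hc : (0:ℝ) ≤ μ ^ 2 * (r:ℝ) ^ 2 / ((m:ℝ)*n) * frobSq L := by positivity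
    calc t ^ 2 ≤ (∑ p ∈ T, |L p.1 p.2| * |S p.1 p.2|) ^ 2 := by
          apply pow_le_pow_left₀ ht0 habs
      _ ≤ (∑ p ∈ T, (L p.1 p.2) ^ 2) * (∑ p ∈ T, (S p.1 p.2) ^ 2) := hcs2
      _ ≤ ((T.card : ℝ) * (μ ^ 2 * (r:ℝ) ^ 2 / ((m:ℝ)*n) * frobSq L)) * frobSq S := by
          exact mul_le_mul hLT hST hSTnn (le_trans hLTnn hLT)
      _ ≤ ((s:ℝ) * (μ ^ 2 * (r:ℝ) ^ 2 / ((m:ℝ)*n) * frobSq L)) * frobSq S := by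
          have := mul_le_mul_of_nonneg_right (mul_le_mul_of_nonneg_right hTcard hc) hBnn
          exact this
      _ = q * frobSq L * frobSq S := by rw [hq_def]; ring
  -- expansion of frobSq X
  have hexp : frobSq X = frobSq L + 2 * mInner L S + frobSq S := by
    simp only [hX, frobSq, mInner, Matrix.add_apply, Finset.mul_sum, ← Finset.sum_add_distrib]
    exact Finset.sum_congr rfl fun i _ => Finset.sum_congr rfl fun j _ => by ring
  have hXge : frobSq L - 2 * t + frobSq S ≤ frobSq X := by
    have : -t ≤ mInner L S := neg_abs_le _
    linarith
  obtain ⟨hkL, hkS⟩ := key_ineq q (frobSq L) (frobSq S) t (frobSq X) hq0 hAnn hBnn ht0 ht2 hXge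
  -- convert to sqrt form
  have hP : (0:ℝ) < 1 - q := by linarith
  have hrpow : (1 - q) ^ (-(1/2) : ℝ) = (Real.sqrt (1 - q))⁻¹ := by
    rw [Real.rpow_neg hP.le, ← Real.sqrt_eq_rpow]
  have hsq : 0 < Real.sqrt (1 - q) := Real.sqrt_pos.mpr hP
  have final : ∀ A : ℝ, 0 ≤ A → (1 - q) * A ≤ frobSq X →
      Real.sqrt A ≤ (1 - q) ^ (-(1/2) : ℝ) * Real.sqrt (frobSq X) := by
    intro A hA hAX
    rw [hrpow, inv_mul_eq_div, le_div_iff₀ hsq]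
    rw [← Real.sqrt_mul hA]
    exact Real.sqrt_le_sqrt (by linarith [mul_comm A (1-q)] )
  exact ⟨final _ hAnn hkL, final _ hBnn hkS⟩
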